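/- arXiv:0705.0741 — 4 statements merged into one kernel-verified Lean document; each statement's English description precedes it below -/
import Mathlib

section
/- Let p, q ≥ 1 be coprime integers with p + q ≥ 3 and let f = x^p·y^q ∈ ℂ[x,y]. Then the reduced Brieskorn module B̄(f) = B(f)/B(f)_tors is a free ℂ[t]-module of rank 1 generated by the class of x^{p−1}·y^{q−1}: for every g ∈ ℂ[x,y] there exists a unique polynomial P ∈ ℂ[t] such that f^k·(g − P(f)·x^{p−1}·y^{q−1}) ∈ D_f for some k ≥ 0. -/
open MvPolynomial

/-- Membership in `D_f = {f_x·∂g/∂y − f_y·∂g/∂x : g ∈ ℂ[x,y]}`. -/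
def Dmem (f w : MvPolynomial (Fin 2) ℂ) : Prop :=
  ∃ g : MvPolynomial (Fin 2) ℂ,
    w = pderiv 0 f * pderiv 1 g - pderiv 1 f * pderiv 0 g

namespace S13
open Finsupp
noncomputable section

def fe (p q : ℕ) : Fin 2 →₀ ℕ := Finsupp.single 0 p + Finsupp.single 1 q
def e0 (p q : ℕ) : Fin 2 →₀ ℕ := Finsupp.single 0 (p - 1) + Finsupp.single 1 (q - 1)

@[simp] lemma fe_apply0 (p q : ℕ) : fe p q 0 = p := by simp [fe, Finsupp.single_apply]
@[simp] lemma fe_apply1 (p q : ℕ) : fe p q 1 = q := by simp [fe, Finsupp.single_apply]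
@[simp] lemma e0_apply0 (p q : ℕ) : e0 p q 0 = p - 1 := by simp [e0, Finsupp.single_apply]
@[simp] lemma e0_apply1 (p q : ℕ) : e0 p q 1 = q - 1 := by simp [e0, Finsupp.single_apply]

def L (f : MvPolynomial (Fin 2) ℂ) :
    MvPolynomial (Fin 2) ℂ →ₗ[ℂ] MvPolynomial (Fin 2) ℂ :=
  (LinearMap.mulLeft ℂ (pderiv 0 f)) ∘ₗ (pderiv 1).toLinearMap
    - (LinearMap.mulLeft ℂ (pderiv 1 f)) ∘ₗ (pderiv 0).toLinearMap

lemma L_apply (f g : MvPolynomial (Fin 2) ℂ) :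
    L f g = pderiv 0 f * pderiv 1 g - pderiv 1 f * pderiv 0 g := rfl

variable {p q : ℕ}

lemma L_monomial (hp : 1 ≤ p) (hq : 1 ≤ q) (d : Fin 2 →₀ ℕ) (c : ℂ) :
    L (monomial (fe p q) 1) (monomial d c)
      = ((p : ℂ) * (d 1 : ℕ) - (q : ℂ) * (d 0 : ℕ)) • monomial (d + e0 p q) c := by
  rw [L_apply, pderiv_monomial, pderiv_monomial, pderiv_monomial, pderiv_monomial,
    monomial_mul, monomial_mul, smul_monomial, fe_apply0, fe_apply1]
  have hE1 : d 1 ≠ 0 → (fe p q - Finsupp.single 0 1) + (d - Finsupp.single 1 1) = d + e0 p q := by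
    intro h; ext i; fin_cases i <;>
      simp [Finsupp.tsub_apply, Finsupp.single_apply, fe, e0] <;> omega
  have hE2 : d 0 ≠ 0 → (fe p q - Finsupp.single 1 1) + (d - Finsupp.single 0 1) = d + e0 p q := by
    intro h; ext i; fin_cases i <;>
      simp [Finsupp.tsub_apply, Finsupp.single_apply, fe, e0] <;> omega
  by_cases h1 : d 1 = 0 <;> by_cases h0 : d 0 = 0
  · simp [h1, h0]
  · rw [hE2 h0]
    simp only [h1, Nat.cast_zero, mul_zero, map_zero, zero_sub, ← map_neg]
    congr 1; rw [smul_eq_mul]; push_cast [h1]; ring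
  · rw [hE1 h1]
    simp only [h0, Nat.cast_zero, mul_zero, map_zero, sub_zero]
    congr 1; rw [smul_eq_mul]; push_cast [h0]; ring
  · rw [hE1 h1, hE2 h0, ← map_sub]
    congr 1; rw [smul_eq_mul]; push_cast; ring

lemma coeff_L_exc (hp : 1 ≤ p) (hq : 1 ≤ q) (E : Fin 2 →₀ ℕ)
    (hE : q * (E 0 + 1) = p * (E 1 + 1)) (g : MvPolynomial (Fin 2) ℂ) :
    coeff E (L (monomial (fe p q) 1) g) = 0 := by
  induction g using MvPolynomial.induction_on' with
  | add a b ha hb => rw [map_add, coeff_add, ha, hb, add_zero]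
  | monomial d c =>
    rw [L_monomial hp hq, coeff_smul, coeff_monomial]
    split_ifs with h
    · have hE0 : E 0 = d 0 + (p - 1) := by rw [← h]; simp
      have hE1 : E 1 = d 1 + (q - 1) := by rw [← h]; simp
      rw [hE0, hE1] at hE
      have hpp : d 0 + (p-1) + 1 = d 0 + p := by omega
      have hqq : d 1 + (q-1) + 1 = d 1 + q := by omega
      rw [hpp, hqq, Nat.mul_add, Nat.mul_add, Nat.mul_comm q p] at hE
      have h2 : q * d 0 = p * d 1 := by omega
      have hs : (p : ℂ) * (d 1 : ℕ) - (q : ℂ) * (d 0 : ℕ) = 0 := by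
        have : ((q * d 0 : ℕ) : ℂ) = ((p * d 1 : ℕ) : ℂ) := by rw [h2]
        push_cast at this; linear_combination -this
      rw [hs, zero_smul]
    · rw [smul_zero]

lemma exists_L_eq (hp : 1 ≤ p) (hq : 1 ≤ q) (w : MvPolynomial (Fin 2) ℂ)
    (h : ∀ d ∈ w.support, p ≤ d 0 + 1 ∧ q ≤ d 1 + 1 ∧ q * (d 0 + 1) ≠ p * (d 1 + 1)) :
    ∃ g, L (monomial (fe p q) 1) g = w := by
  refine ⟨∑ d ∈ w.support, monomial (d - e0 p q)
      (coeff d w / ((p : ℂ) * ((d 1 + 1 - q : ℕ) : ℂ) - (q : ℂ) * ((d 0 + 1 - p : ℕ) : ℂ))), ?_⟩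
  rw [map_sum]
  conv_rhs => rw [← support_sum_monomial_coeff w]
  refine Finset.sum_congr rfl fun d hd => ?_
  obtain ⟨hd0, hd1, hne⟩ := h d hd
  rw [L_monomial hp hq]
  have hsub1 : (d - e0 p q) 1 = d 1 + 1 - q := by
    rw [Finsupp.tsub_apply]; simp; omega
  have hsub0 : (d - e0 p q) 0 = d 0 + 1 - p := by
    rw [Finsupp.tsub_apply]; simp; omega
  have hEe : (d - e0 p q) + e0 p q = d := by
    ext i; fin_cases i <;>
      simp [Finsupp.tsub_apply, Finsupp.add_apply] <;> omega
  have hs : (p : ℂ) * (((d - e0 p q) 1 : ℕ) : ℂ) - (q : ℂ) * (((d - e0 p q) 0 : ℕ) : ℂ)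
      = (p : ℂ) * ((d 1 + 1 - q : ℕ) : ℂ) - (q : ℂ) * ((d 0 + 1 - p : ℕ) : ℂ) := by
    rw [hsub1, hsub0]
  have hs0 : (p : ℂ) * ((d 1 + 1 - q : ℕ) : ℂ) - (q : ℂ) * ((d 0 + 1 - p : ℕ) : ℂ) ≠ 0 := by
    rw [Nat.cast_sub hd1, Nat.cast_sub hd0]
    intro hcon
    apply hne
    have h1 : (q : ℂ) * ((d 0 : ℕ) + 1) = (p : ℂ) * ((d 1 : ℕ) + 1) := by
      push_cast at hcon ⊢
      linear_combination -hcon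
    exact_mod_cast h1
  rw [hs, hEe, smul_monomial, div_eq_mul_inv, mul_comm (coeff d w)]
  congr 1
  rw [smul_eq_mul, ← mul_assoc, mul_inv_cancel₀ hs0, one_mul]

lemma XX_eq (a b : ℕ) : (X 0 ^ a * X 1 ^ b : MvPolynomial (Fin 2) ℂ)
    = monomial (Finsupp.single 0 a + Finsupp.single 1 b) 1 := by
  rw [X_pow_eq_monomial, X_pow_eq_monomial, monomial_mul, one_mul]

lemma f_eq (p q : ℕ) : (X 0 ^ p * X 1 ^ q : MvPolynomial (Fin 2) ℂ) = monomial (fe p q) 1 :=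
  XX_eq p q

lemma e_eq (p q : ℕ) :
    (X 0 ^ (p - 1) * X 1 ^ (q - 1) : MvPolynomial (Fin 2) ℂ) = monomial (e0 p q) 1 :=
  XX_eq (p - 1) (q - 1)

lemma pow_mul_L (f : MvPolynomial (Fin 2) ℂ) (k : ℕ) :
    ∀ g : MvPolynomial (Fin 2) ℂ, f ^ k * L f g = L f (f ^ k * g) := by
  induction k with
  | zero => intro g; simp
  | succ n ih =>
    intro g
    have h1 : f * L f g = L f (f * g) := by
      simp only [L_apply, pderiv_mul]; ring
    calc f ^ (n + 1) * L f g = f ^ n * (f * L f g) := by ring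
      _ = f ^ n * L f (f * g) := by rw [h1]
      _ = L f (f ^ n * (f * g)) := ih (f * g)
      _ = L f (f ^ (n + 1) * g) := by rw [← mul_assoc, ← pow_succ]

lemma coeff_pow_mul (k m : ℕ) (w : MvPolynomial (Fin 2) ℂ) :
    coeff ((k + m) • fe p q + e0 p q) ((monomial (fe p q) 1 : MvPolynomial (Fin 2) ℂ) ^ k * w)
      = coeff (m • fe p q + e0 p q) w := by
  have hE : (k + m) • fe p q + e0 p q = k • fe p q + (m • fe p q + e0 p q) := by
    rw [add_smul, add_assoc]
  rw [hE, monomial_pow, one_pow, coeff_monomial_mul', if_pos le_self_add,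
    add_tsub_cancel_left, one_mul]

lemma coeff_aeval_mul (hp : 1 ≤ p) (P : Polynomial ℂ) (m : ℕ) :
    coeff (m • fe p q + e0 p q)
      (Polynomial.aeval (monomial (fe p q) 1 : MvPolynomial (Fin 2) ℂ) P * monomial (e0 p q) 1)
      = P.coeff m := by
  rw [coeff_mul_monomial', if_pos le_add_self, add_tsub_cancel_right, mul_one,
    Polynomial.aeval_eq_sum_range, coeff_sum]
  have hcong : ∀ i ∈ Finset.range (P.natDegree + 1),
      coeff (m • fe p q) (P.coeff i • (monomial (fe p q) 1 : MvPolynomial (Fin 2) ℂ) ^ i)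
        = if i = m then P.coeff i else 0 := by
    intro i _
    rw [coeff_smul, monomial_pow, one_pow, coeff_monomial]
    by_cases him : i = m
    · subst him; simp
    · rw [if_neg, if_neg him, smul_zero]
      intro hcontra
      apply him
      have h0 := congrArg (fun s : Fin 2 →₀ ℕ => s 0) hcontra
      simp only [Finsupp.smul_apply, fe_apply0, smul_eq_mul] at h0
      exact Nat.eq_of_mul_eq_mul_right hp h0
  rw [Finset.sum_congr rfl hcong, Finset.sum_ite_eq']
  split_ifs with h
  · rfl
  · symm
    refine Polynomial.coeff_eq_zero_of_natDegree_lt ?_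
    simp only [Finset.mem_range] at h
    omega

lemma coeff_exc_eq_zero (hp : 1 ≤ p) {g : MvPolynomial (Fin 2) ℂ} {m : ℕ}
    (hm : g.totalDegree < m) : coeff (m • fe p q + e0 p q) g = 0 := by
  apply coeff_eq_zero_of_totalDegree_lt
  set d : Fin 2 →₀ ℕ := m • fe p q + e0 p q with hd
  have hd0 : d 0 = m * p + (p - 1) := by
    simp [hd, Finsupp.add_apply, Finsupp.smul_apply, smul_eq_mul]
  have hmp : m ≤ m * p := Nat.le_mul_of_pos_right m hp
  have hd0pos : d 0 ≠ 0 := by omega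
  have h1 : d 0 ≤ ∑ i ∈ d.support, d i :=
    Finset.single_le_sum (fun i _ => Nat.zero_le (d i)) (Finsupp.mem_support_iff.2 hd0pos)
  omega

lemma exc_cond (hp : 1 ≤ p) (hq : 1 ≤ q) (n : ℕ) :
    q * ((n • fe p q + e0 p q) 0 + 1) = p * ((n • fe p q + e0 p q) 1 + 1) := by
  have h0 : (n • fe p q + e0 p q) 0 = n * p + (p - 1) := by
    simp [Finsupp.add_apply, Finsupp.smul_apply, smul_eq_mul]
  have h1 : (n • fe p q + e0 p q) 1 = n * q + (q - 1) := by
    simp [Finsupp.add_apply, Finsupp.smul_apply, smul_eq_mul]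
  rw [h0, h1, show n * p + (p - 1) + 1 = n * p + p by omega,
    show n * q + (q - 1) + 1 = n * q + q by omega]
  ring

lemma uniq (hp : 1 ≤ p) (hq : 1 ≤ q) (g : MvPolynomial (Fin 2) ℂ) (P₁ P₂ : Polynomial ℂ)
    (h₁ : ∃ k : ℕ, ∃ g₁, L (monomial (fe p q) 1)  g₁ =
      (monomial (fe p q) 1 : MvPolynomial (Fin 2) ℂ) ^ k *
        (g - Polynomial.aeval (monomial (fe p q) 1 : MvPolynomial (Fin 2) ℂ) P₁ * monomial (e0 p q) 1))
    (h₂ : ∃ k : ℕ, ∃ g₂, L (monomial (fe p q) 1) g₂ =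
      (monomial (fe p q) 1 : MvPolynomial (Fin 2) ℂ) ^ k *
        (g - Polynomial.aeval (monomial (fe p q) 1 : MvPolynomial (Fin 2) ℂ) P₂ * monomial (e0 p q) 1)) :
    P₁ = P₂ := by
  obtain ⟨k₁, g₁, hg₁⟩ := h₁
  obtain ⟨k₂, g₂, hg₂⟩ := h₂
  set F : MvPolynomial (Fin 2) ℂ := monomial (fe p q) 1 with hF
  set E : MvPolynomial (Fin 2) ℂ := monomial (e0 p q) 1 with hEdef
  have key : L F (F ^ k₂ * g₁ - F ^ k₁ * g₂)
      = F ^ (k₁ + k₂) * (Polynomial.aeval F (P₂ - P₁) * E) := by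
    rw [map_sub, ← pow_mul_L, ← pow_mul_L, hg₁, hg₂, map_sub]
    ring
  have hcoeff : ∀ m : ℕ, (P₂ - P₁).coeff m = 0 := by
    intro m
    have h3 := coeff_L_exc hp hq ((k₁ + k₂ + m) • fe p q + e0 p q)
      (exc_cond hp hq (k₁ + k₂ + m)) (F ^ k₂ * g₁ - F ^ k₁ * g₂)
    rw [key, coeff_pow_mul, coeff_aeval_mul hp] at h3
    exact h3
  have : P₂ - P₁ = 0 := Polynomial.ext fun m => by rw [hcoeff m, Polynomial.coeff_zero]
  linear_combination -this

lemma dmem_iff (f w : MvPolynomial (Fin 2) ℂ) : Dmem f w ↔ ∃ g', L f g' = w :=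
  ⟨fun ⟨g', h⟩ => ⟨g', by rw [L_apply, ← h]⟩, fun ⟨g', h⟩ => ⟨g', by rw [← h, L_apply]⟩⟩

end
end S13

/-- For `f = x^p y^q` with `p, q ≥ 1` coprime and `p + q ≥ 3`, the reduced
Brieskorn module `B̄(f) = B(f)/B(f)_tors` is free of rank 1 over `ℂ[t]`, generated by the
class of `x^{p−1} y^{q−1}`: for every `g ∈ ℂ[x,y]` there is a unique `P ∈ ℂ[t]` with
`f^k·(g − P(f)·x^{p−1}y^{q−1}) ∈ D_f` for some `k ≥ 0`. -/
theorem statement13 (p q : ℕ) (hp : 1 ≤ p) (hq : 1 ≤ q) (hpq : Nat.Coprime p q)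
    (hpq3 : 3 ≤ p + q) (g : MvPolynomial (Fin 2) ℂ) :
    ∃! P : Polynomial ℂ, ∃ k : ℕ,
      Dmem (X 0 ^ p * X 1 ^ q)
        ((X 0 ^ p * X 1 ^ q : MvPolynomial (Fin 2) ℂ) ^ k *
          (g - Polynomial.aeval (X 0 ^ p * X 1 ^ q : MvPolynomial (Fin 2) ℂ) P *
            (X 0 ^ (p - 1) * X 1 ^ (q - 1)))) := by
  classical
  rw [S13.f_eq p q, S13.e_eq p q]
  simp only [S13.dmem_iff]
  set P : Polynomial ℂ := ∑ m ∈ Finset.range (g.totalDegree + 1),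
    Polynomial.monomial m (coeff (m • S13.fe p q + S13.e0 p q) g) with hP
  have hPcoeff : ∀ m, P.coeff m = coeff (m • S13.fe p q + S13.e0 p q) g := by
    intro m
    rw [hP, Polynomial.finset_sum_coeff]
    have hcong : ∀ i ∈ Finset.range (g.totalDegree + 1),
        (Polynomial.monomial i (coeff (i • S13.fe p q + S13.e0 p q) g)).coeff m
          = if i = m then coeff (i • S13.fe p q + S13.e0 p q) g else 0 := by
      intro i _; rw [Polynomial.coeff_monomial]
    rw [Finset.sum_congr rfl hcong, Finset.sum_ite_eq']
    split_ifs with h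
    · rfl
    · symm
      refine S13.coeff_exc_eq_zero hp ?_
      simp only [Finset.mem_range] at h; omega
  have hex : ∃ g', S13.L (monomial (S13.fe p q) 1) g'
      = (monomial (S13.fe p q) 1 : MvPolynomial (Fin 2) ℂ) ^ 1 *
          (g - Polynomial.aeval (monomial (S13.fe p q) 1 : MvPolynomial (Fin 2) ℂ) P *
            monomial (S13.e0 p q) 1) := by
    apply S13.exists_L_eq hp hq
    intro d hd
    rw [mem_support_iff, pow_one, coeff_monomial_mul'] at hd
    split_ifs at hd with hle
    · have hle0 : p ≤ d 0 := by
        have := Finsupp.le_def.mp hle 0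
        simpa using this
      have hle1 : q ≤ d 1 := by
        have := Finsupp.le_def.mp hle 1
        simpa using this
      refine ⟨by omega, by omega, ?_⟩
      intro hc
      apply hd
      have hdvd : p ∣ q * (d 0 + 1) := ⟨d 1 + 1, hc⟩
      obtain ⟨N, hN⟩ := hpq.dvd_of_dvd_mul_left hdvd
      have hNq : d 1 + 1 = q * N := by
        have h5 : p * (q * N) = p * (d 1 + 1) := by rw [← hc, hN]; ring
        exact (Nat.eq_of_mul_eq_mul_left (by omega) h5).symm
      have hN2 : 2 ≤ N := by
        by_contra h'
        push_neg at h'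
        have h6 : p * N ≤ p * 1 := Nat.mul_le_mul_left p (by omega)
        simp only [mul_one] at h6
        omega
      set m := N - 2 with hm
      have hNm : N = m + 2 := by omega
      have hd0 : d 0 + 1 = m * p + p + p := by rw [hN, hNm]; ring
      have hd1 : d 1 + 1 = m * q + q + q := by rw [hNq, hNm]; ring
      have hdfe : d - S13.fe p q = m • S13.fe p q + S13.e0 p q := by
        ext i; fin_cases i <;>
          simp [Finsupp.tsub_apply, S13.fe, S13.e0, Finsupp.single_apply,
            Finsupp.add_apply, Finsupp.smul_apply, smul_eq_mul] <;> omega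
      rw [hdfe, coeff_sub, S13.coeff_aeval_mul hp P m, hPcoeff m, sub_self, mul_zero]
    · exact absurd rfl hd
  exact ⟨P, ⟨1, hex⟩, fun y hy => S13.uniq hp hq g y P hy ⟨1, hex⟩⟩
end

section
/- Let p, q ≥ 1 be coprime integers and let F = {(x,y) ∈ ℂ² : x^p·y^q = 1} be the Milnor fiber of f = x^p·y^q. Then F is path-connected and its fundamental group is infinite cyclic, π₁(F) ≅ ℤ; in particular the first Betti number of F equals 1. -/
open Complex Set unitInterval

noncomputable section MilnorAux

/-- min is 1-Lipschitz in first arg -/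
lemma minlip (a b c : ℝ) : |min a c - min b c| ≤ |a - b| := by
  rcases le_total a c with h1 | h1 <;> rcases le_total b c with h2 | h2 <;>
    simp [min_eq_left, min_eq_right, h1, h2, abs_le] <;>
    cases' abs_le.1 (le_refl |a - b|) with hl hr <;>
    constructor <;> cases' abs_sub_le_iff.1 (le_refl |a-b|) with h3 h4 <;> linarith [abs_nonneg (a - b), le_abs_self (a - b), neg_abs_le (a - b)]

/-- `L` is a lift of `f` through `exp`, normalized with `L 0 = 0`. -/
def IsLift (f : I → ℂ) (L : I → ℂ) : Prop :=
  Continuous L ∧ L 0 = 0 ∧ ∀ t, f 0 * Complex.exp (L t) = f t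

lemma telescope (h : ℕ → ℂ) (hne : ∀ k, h k ≠ 0) (n : ℕ) :
    (∏ k ∈ Finset.range n, h (k + 1) / h k) = h n / h 0 := by
  induction n with
  | zero => simp [div_self (hne 0)]
  | succ n ih =>
      rw [Finset.prod_range_succ, ih]
      field_simp
      rw [mul_div_mul_left _ _ (hne n)]

lemma exists_lift {f : I → ℂ} (hf : Continuous f) (h0 : ∀ t, f t ≠ 0) :
    ∃ L, IsLift f L := by
  -- minimum of |f|
  obtain ⟨t₀, -, ht₀'⟩ := isCompact_univ.exists_isMinOn (Set.univ_nonempty)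
    (continuous_norm.comp hf).continuousOn
  have ht₀ : ∀ t : I, ‖f t₀‖ ≤ ‖f t‖ := fun t => ht₀' (Set.mem_univ t)
  set e : ℝ := ‖f t₀‖ with he
  have he0 : 0 < e := by
    simpa [he, norm_pos_iff] using h0 t₀
  have hmin : ∀ t : I, e ≤ ‖f t‖ := fun t => ht₀ t
  -- uniform continuity
  have huc : UniformContinuous f := CompactSpace.uniformContinuous_of_continuous hf
  obtain ⟨δ, hδ0, hδ⟩ := Metric.uniformContinuous_iff.1 huc e he0
  obtain ⟨n, hn⟩ := exists_nat_one_div_lt hδ0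
  set N : ℕ := n + 1 with hN
  have hN0 : (0:ℝ) < N := by positivity
  -- subdivision points
  set c : ℕ → ℝ := fun k => min ((k : ℝ) / N) 1 with hc
  have hc_mem : ∀ k, 0 ≤ c k := fun k => le_min (by positivity) zero_le_one
  have hstep : ∀ k, |c (k + 1) - c k| ≤ 1 / N := by
    intro k
    have heq : ((k+1 : ℕ) : ℝ)/N - (k:ℝ)/N = 1/N := by push_cast; ring
    calc |c (k+1) - c k| ≤ |((k+1 : ℕ) : ℝ)/N - (k:ℝ)/N| := minlip _ _ _
    _ = 1 / N := by rw [heq, abs_of_pos (by positivity)]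
  -- the sample points
  set mk : ℕ → I → I := fun k t => ⟨min (c k) (t : ℝ),
    ⟨le_min (hc_mem k) t.2.1, le_trans (min_le_right _ _) t.2.2⟩⟩ with hmk
  have hmk_cont : ∀ k, Continuous fun t => mk k t := by
    intro k
    apply Continuous.subtype_mk
    exact Continuous.min continuous_const continuous_subtype_val
  have hmk0 : ∀ k, mk k 0 = 0 := by
    intro k; apply Subtype.ext; simp [hmk, min_eq_right (hc_mem k)]
  have hmkzero : ∀ t, mk 0 t = 0 := by
    intro t; apply Subtype.ext
    simp [hmk, hc]
    exact t.2.1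
  have hmkN : ∀ t, mk N t = t := by
    intro t; apply Subtype.ext
    have : c N = 1 := by simp [hc, div_self (ne_of_gt hN0)]
    simp [hmk, this, min_eq_right t.2.2]
  have hclose : ∀ k (t : I), dist (f (mk (k+1) t)) (f (mk k t)) < e := by
    intro k t
    apply hδ
    have : dist (mk (k+1) t) (mk k t) ≤ 1 / N := by
      rw [Subtype.dist_eq]
      calc dist (min (c (k+1)) (t:ℝ)) (min (c k) (t:ℝ)) = |min (c (k+1)) (t:ℝ) - min (c k) (t:ℝ)| := by rw [Real.dist_eq]
      _ ≤ |c (k+1) - c k| := minlip _ _ _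
      _ ≤ 1 / N := hstep k
    calc dist (mk (k+1) t) (mk k t) ≤ 1/N := this
    _ < δ := by rw [hN]; exact_mod_cast hn
  -- ratios
  set r : ℕ → I → ℂ := fun k t => f (mk (k+1) t) / f (mk k t) with hr
  have hr_near : ∀ k t, ‖r k t - 1‖ < 1 := by
    intro k t
    have hb : e ≤ ‖f (mk k t)‖ := hmin _
    have : r k t - 1 = (f (mk (k+1) t) - f (mk k t)) / f (mk k t) := by
      simp only [hr]; exact div_sub_one (h0 _)
    rw [this, norm_div]
    rw [div_lt_one (lt_of_lt_of_le he0 hb)]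
    calc ‖f (mk (k+1) t) - f (mk k t)‖ = dist (f (mk (k+1) t)) (f (mk k t)) := by
          rw [Complex.dist_eq]
    _ < e := hclose k t
    _ ≤ _ := hb
  have hr_slit : ∀ k t, r k t ∈ Complex.slitPlane := by
    intro k t
    left
    have h1 : ‖1 - r k t‖ < 1 := by
      rw [← norm_neg]; simpa using hr_near k t
    have := ((le_abs_self _).trans (Complex.abs_re_le_norm (1 - r k t))).trans_lt h1
    simp only [Complex.sub_re, Complex.one_re] at this
    linarith
  have hr_ne : ∀ k t, r k t ≠ 0 := fun k t => Complex.slitPlane_ne_zero (hr_slit k t)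
  have hr_cont : ∀ k, Continuous fun t => r k t :=
    fun k => ((hf.comp (hmk_cont (k+1))).div (hf.comp (hmk_cont k)) (fun t => h0 _))
  refine ⟨fun t => ∑ k ∈ Finset.range N, Complex.log (r k t), ?_, ?_, ?_⟩
  · apply continuous_finset_sum
    intro k _
    rw [continuous_iff_continuousAt]
    intro t
    exact (continuousAt_clog (hr_slit k t)).comp (hr_cont k).continuousAt
  · have : ∀ k, r k 0 = 1 := by
      intro k; simp [hr, hmk0, div_self (h0 0)]
    simp [this]
  · intro t
    rw [Complex.exp_sum]
    have : ∀ k ∈ Finset.range N, Complex.exp (Complex.log (r k t)) = r k t := by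
      intro k _; exact Complex.exp_log (hr_ne k t)
    rw [Finset.prod_congr rfl this]
    have := telescope (fun k => f (mk k t)) (fun k => h0 _) N
    simp only [hr]
    rw [this, hmkN, hmkzero]
    exact mul_div_cancel₀ _ (h0 0)

section W2
open Real

lemma lift_unique {f L L' : I → ℂ} (hL : IsLift f L) (hL' : IsLift f L')
    (h0 : ∀ t, f t ≠ 0) : L = L' := by
  obtain ⟨hc, h00, hexp⟩ := hL
  obtain ⟨hc', h00', hexp'⟩ := hL'
  have hf0 : f 0 ≠ 0 := h0 0
  have key : ∀ t, ∃ m : ℤ, L t - L' t = m * (2 * Real.pi * Complex.I) := by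
    intro t
    rw [← Complex.exp_eq_one_iff, Complex.exp_sub]
    have h1 : f 0 * Complex.exp (L t) = f 0 * Complex.exp (L' t) := by
      rw [hexp t, hexp' t]
    have h2 : Complex.exp (L t) = Complex.exp (L' t) := mul_left_cancel₀ hf0 h1
    rw [h2, div_self (Complex.exp_ne_zero _)]
  set D : I → ℂ := fun t => L t - L' t with hD
  have hDc : Continuous D := hc.sub hc'
  have hD0 : D 0 = 0 := by simp [hD, h00, h00']
  have hclopen : IsClopen {t : I | D t = 0} := by
    constructor
    · -- closed
      exact isClosed_eq hDc continuous_const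
    · -- open
      rw [isOpen_iff_mem_nhds]
      intro t ht
      have : ∀ᶠ s in nhds t, ‖D s - D t‖ < 1 := by
        have := hDc.continuousAt (x := t)
        have h2 := Metric.tendsto_nhds.1 this 1 one_pos
        simpa [Complex.dist_eq] using h2
      refine this.mono fun s hs => ?_
      obtain ⟨m, hm⟩ := key s
      obtain ⟨m', hm'⟩ := key t
      have ht' : D t = 0 := ht
      rw [ht', sub_zero] at hs
      simp only [hD] at hs ⊢
      rw [hm] at hs
      have habs : ‖(m : ℂ) * (2 * Real.pi * Complex.I)‖ = |(m:ℝ)| * (2 * Real.pi) := by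
        rw [norm_mul, norm_mul, norm_mul]
        simp [Complex.norm_real, Complex.norm_intCast, _root_.abs_of_pos Real.pi_pos,
          Int.cast_abs]
      have : |(m:ℝ)| * (2 * Real.pi) < 1 := by rwa [habs] at hs
      have hm0 : m = 0 := by
        by_contra hne
        have : (1:ℝ) ≤ |(m:ℝ)| := by
          rw [← Int.cast_abs]
          exact_mod_cast Int.one_le_abs hne
        nlinarith [Real.pi_gt_three]
      rw [hm, hm0]; simp
  have := (isClopen_iff.1 hclopen).resolve_left (Set.nonempty_iff_ne_empty.1 ⟨0, hD0⟩)
  funext t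
  have ht : t ∈ {t : I | D t = 0} := this ▸ Set.mem_univ t
  simpa [hD, sub_eq_zero] using ht

open scoped Classical in
/-- winding number of a loop in ℂ∖{0} -/
def winding (f : I → ℂ) : ℤ :=
  if h : ∃ m : ℤ, ∃ L, IsLift f L ∧ L 1 = m * (2 * Real.pi * Complex.I) then h.choose else 0

lemma winding_spec {f : I → ℂ} (hf : Continuous f) (h0 : ∀ t, f t ≠ 0)
    (hloop : f 1 = f 0) {L : I → ℂ} (hL : IsLift f L) :
    L 1 = (winding f : ℂ) * (2 * Real.pi * Complex.I) := by
  have hex : ∃ m : ℤ, ∃ L, IsLift f L ∧ L 1 = m * (2 * Real.pi * Complex.I) := by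
    obtain ⟨L₀, hL₀⟩ := exists_lift hf h0
    have : Complex.exp (L₀ 1) = 1 := by
      have := hL₀.2.2 1
      rw [hloop] at this
      exact mul_left_cancel₀ (h0 0) (by rw [this, mul_one])
    obtain ⟨m, hm⟩ := Complex.exp_eq_one_iff.1 this
    exact ⟨m, L₀, hL₀, hm⟩
  classical
  rw [winding]
  rw [dif_pos hex]
  obtain ⟨L', hL', hm'⟩ := hex.choose_spec
  rw [lift_unique hL hL' h0]
  exact hm'

lemma winding_eq {f : I → ℂ} (hf : Continuous f) (h0 : ∀ t, f t ≠ 0)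
    (hloop : f 1 = f 0) {L : I → ℂ} (hL : IsLift f L) {m : ℤ}
    (hm : L 1 = m * (2 * Real.pi * Complex.I)) : winding f = m := by
  have h1 := winding_spec hf h0 hloop hL
  rw [hm] at h1
  have h2π : (2 * Real.pi * Complex.I : ℂ) ≠ 0 := by
    simp [Complex.I_ne_zero, Real.pi_ne_zero]
  exact_mod_cast mul_right_cancel₀ h2π h1.symm

end W2

section W3

lemma slit_of_close {a b : ℂ} (hb : b ≠ 0) (h : ‖a - b‖ < ‖b‖) :
    a / b ∈ Complex.slitPlane ∧ a / b ≠ 0 := by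
  have hab : ‖a / b - 1‖ < 1 := by
    rw [div_sub_one hb, norm_div, div_lt_one (by simpa [norm_pos_iff] using hb)]
    exact h
  constructor
  · left
    have h1 : ‖1 - a / b‖ < 1 := by
      rw [← norm_neg]; simpa using hab
    have := ((le_abs_self _).trans (Complex.abs_re_le_norm (1 - a / b))).trans_lt h1
    simp only [Complex.sub_re, Complex.one_re] at this
    linarith
  · intro h0
    rw [h0] at hab
    simp at hab

lemma winding_congr {f f' : I → ℂ} (hf : Continuous f) (h0 : ∀ t, f t ≠ 0)
    (hloop : f 1 = f 0) (hf' : Continuous f') (h0' : ∀ t, f' t ≠ 0) (hloop' : f' 1 = f' 0)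
    (hbase : f' 0 = f 0) (hclose : ∀ t, ‖f' t - f t‖ < ‖f t‖) :
    winding f' = winding f := by
  obtain ⟨L, hL⟩ := exists_lift hf h0
  set d : I → ℂ := fun t => f' t / f t with hd
  have hslit : ∀ t, d t ∈ Complex.slitPlane := fun t => (slit_of_close (h0 t) (hclose t)).1
  have hdc : Continuous d := hf'.div hf h0
  have hd0 : d 0 = 1 := by simp [hd, hbase, div_self (h0 0)]
  have hd1 : d 1 = 1 := by simp [hd, hloop, hloop', hbase, div_self (h0 0)]
  set L' : I → ℂ := fun t => L t + Complex.log (d t) with hL'd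
  have hL' : IsLift f' L' := by
    refine ⟨?_, ?_, ?_⟩
    · apply hL.1.add
      rw [continuous_iff_continuousAt]
      exact fun t => (continuousAt_clog (hslit t)).comp hdc.continuousAt
    · simp [hL'd, hL.2.1, hd0]
    · intro t
      rw [hL'd]
      simp only
      rw [Complex.exp_add, Complex.exp_log (Complex.slitPlane_ne_zero (hslit t)), hbase,
        ← mul_assoc, hL.2.2 t, hd]
      exact mul_div_cancel₀ _ (h0 t)
  have h1 : L' 1 = L 1 := by simp [hL'd, hd1]
  have h2 := winding_spec hf h0 hloop hL
  exact winding_eq hf' h0' hloop' hL' (by rw [h1, h2])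

lemma winding_homotopy {G : I × I → ℂ} (hG : Continuous G) (h0 : ∀ z, G z ≠ 0)
    (hbase : ∀ s, G (s, 0) = G (0, 0)) (hloop : ∀ s, G (s, 1) = G (s, 0)) :
    winding (fun t => G (0, t)) = winding (fun t => G (1, t)) := by
  set W : I → ℤ := fun s => winding (fun t => G (s, t)) with hW
  have hGc : ∀ s : I, Continuous fun t => G (s, t) :=
    fun s => hG.comp (continuous_const.prodMk continuous_id)
  -- local constancy
  have hloc : ∀ s₀ : I, ∃ δ > 0, ∀ s : I, dist s s₀ < δ → W s = W s₀ := by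
    intro s₀
    obtain ⟨z₀, -, hz₀'⟩ := isCompact_univ.exists_isMinOn (Set.univ_nonempty)
      (continuous_norm.comp hG).continuousOn
    have hz₀ : ∀ z, ‖G z₀‖ ≤ ‖G z‖ := fun z => hz₀' (Set.mem_univ z)
    have he0 : 0 < ‖G z₀‖ := by simpa [norm_pos_iff] using h0 z₀
    obtain ⟨δ, hδ0, hδ⟩ := Metric.uniformContinuous_iff.1
      (CompactSpace.uniformContinuous_of_continuous hG) _ he0
    refine ⟨δ, hδ0, fun s hs => ?_⟩
    refine winding_congr (hGc s₀) (fun t => h0 _) (by rw [hloop]) (hGc s) (fun t => h0 _)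
      (by rw [hloop]) (by rw [hbase s, hbase s₀]) fun t => ?_
    have hd : dist ((s, t) : I × I) ((s₀, t) : I × I) < δ := by
      rw [Prod.dist_eq]
      apply max_lt
      · simpa using hs
      · simpa using hδ0
    calc ‖G (s, t) - G (s₀, t)‖ = dist (G (s, t)) (G (s₀, t)) := by
          rw [Complex.dist_eq]
    _ < ‖G z₀‖ := hδ hd
    _ ≤ _ := hz₀ _
  have hclopen : IsClopen {s : I | W s = W 0} := by
    constructor
    · rw [← isOpen_compl_iff, Metric.isOpen_iff]
      intro s₀ hs₀
      obtain ⟨δ, hδ0, hδ⟩ := hloc s₀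
      exact ⟨δ, hδ0, fun s hs hmem => hs₀ (show W s₀ = W 0 by rw [← hδ s hs]; exact hmem)⟩
    · rw [Metric.isOpen_iff]
      intro s₀ hs₀
      obtain ⟨δ, hδ0, hδ⟩ := hloc s₀
      exact ⟨δ, hδ0, fun s hs => show W s = W 0 by rw [hδ s hs]; exact hs₀⟩
  have := (isClopen_iff.1 hclopen).resolve_left (Set.nonempty_iff_ne_empty.1 ⟨0, rfl⟩)
  have h1 : (1 : I) ∈ {s : I | W s = W 0} := this ▸ Set.mem_univ _
  exact (h1 : W 1 = W 0).symm

end W3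
section W4

variable {Y : Type*} [TopologicalSpace Y] {Ψ : Y → ℂ} {x : Y}

lemma winding_refl (hΨ : Continuous Ψ) (hΨ0 : ∀ y, Ψ y ≠ 0) :
    winding (fun t => Ψ ((Path.refl x) t)) = 0 := by
  refine winding_eq (by fun_prop) (fun t => hΨ0 _) rfl
    (L := fun _ => 0) ⟨continuous_const, rfl, fun t => by simp⟩ (m := 0) (by simp)

lemma winding_homotopic (hΨ : Continuous Ψ) (hΨ0 : ∀ y, Ψ y ≠ 0) {γ γ' : Path x x}
    (h : Path.Homotopic γ γ') :
    winding (fun t => Ψ (γ t)) = winding (fun t => Ψ (γ' t)) := by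
  obtain ⟨H⟩ := h
  have h1 : (fun t => Ψ (γ t)) = fun t => Ψ (H (0, t)) := by
    funext t; rw [H.apply_zero]; rfl
  have h2 : (fun t => Ψ (γ' t)) = fun t => Ψ (H (1, t)) := by
    funext t; rw [H.apply_one]; rfl
  rw [h1, h2]
  exact winding_homotopy (G := fun z => Ψ (H z)) (by fun_prop) (fun z => hΨ0 _)
    (fun s => show Ψ (H (s, 0)) = Ψ (H (0, 0)) by rw [H.source, H.source])
    (fun s => show Ψ (H (s, 1)) = Ψ (H (s, 0)) by rw [H.target, H.source])

lemma winding_trans (hΨ : Continuous Ψ) (hΨ0 : ∀ y, Ψ y ≠ 0) (γ γ' : Path x x) :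
    winding (fun t => Ψ ((γ.trans γ') t)) =
      winding (fun t => Ψ (γ t)) + winding (fun t => Ψ (γ' t)) := by
  obtain ⟨L, hL⟩ := exists_lift (f := fun t => Ψ (γ t)) (by fun_prop) (fun t => hΨ0 _)
  obtain ⟨L', hL'⟩ := exists_lift (f := fun t => Ψ (γ' t)) (by fun_prop) (fun t => hΨ0 _)
  have hLe : ∀ z, Ψ (γ 0) * Complex.exp (L z) = Ψ (γ z) := hL.2.2
  have hL'e : ∀ z, Ψ (γ' 0) * Complex.exp (L' z) = Ψ (γ' z) := hL'.2.2
  set proj : ℝ → I := Set.projIcc 0 1 zero_le_one with hproj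
  have hproj1 : proj 1 = 1 := Set.projIcc_right _
  have hproj0 : proj 0 = 0 := Set.projIcc_left _
  set L'' : I → ℂ := (fun s : ℝ => if s ≤ 1/2 then L (proj (2*s)) else L 1 + L' (proj (2*s-1)))
    ∘ (fun t : I => (t : ℝ)) with hL''d
  have hbd : ∀ s : ℝ, s = 1/2 → L (proj (2*s)) = L 1 + L' (proj (2*s-1)) := by
    intro s hs
    rw [hs]
    norm_num [hproj1, hproj0, hL'.2.1]
  have hc : Continuous L'' := by
    apply Continuous.comp _ continuous_subtype_val
    apply Continuous.if_le _ _ continuous_id continuous_const hbd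
    · exact hL.1.comp (continuous_projIcc.comp (by fun_prop))
    · exact continuous_const.add (hL'.1.comp (continuous_projIcc.comp (by fun_prop)))
  have key : ∀ t : I, Ψ ((γ.trans γ') t) = Ψ (γ 0) * Complex.exp (L'' t) := by
    intro t
    rw [Path.trans_apply, hL''d]
    simp only [Function.comp_apply]
    split_ifs with h
    · have hmem : 2 * (t:ℝ) ∈ Set.Icc (0:ℝ) 1 := ⟨by linarith [t.2.1], by linarith⟩
      rw [hproj, Set.projIcc_of_mem _ hmem]
      exact (hLe ⟨2*t, hmem⟩).symm
    · have hmem : 2 * (t:ℝ) - 1 ∈ Set.Icc (0:ℝ) 1 :=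
        ⟨by push_neg at h; linarith, by linarith [t.2.2]⟩
      rw [hproj, Set.projIcc_of_mem _ hmem]
      rw [Complex.exp_add, ← mul_assoc, hLe 1]
      have h9 : Ψ (γ 1) = Ψ (γ' 0) := by rw [γ.target, γ'.source]
      rw [h9, hL'e ⟨2*(t:ℝ)-1, hmem⟩]
  have hLift : IsLift (fun t => Ψ ((γ.trans γ') t)) L'' := by
    refine ⟨hc, ?_, ?_⟩
    · rw [hL''d]
      simp only [Function.comp_apply, Set.Icc.coe_zero]
      rw [if_pos (by norm_num)]
      norm_num [hproj0, hL.2.1]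
    · intro t
      have h0 : (γ.trans γ') 0 = γ 0 := by rw [(γ.trans γ').source, γ.source]
      show Ψ ((γ.trans γ') 0) * Complex.exp (L'' t) = Ψ ((γ.trans γ') t)
      rw [h0, ← key t]
  have hone : L'' 1 = L 1 + L' 1 := by
    rw [hL''d]
    simp only [Function.comp_apply, Set.Icc.coe_one]
    rw [if_neg (by norm_num)]
    norm_num [hproj1]
  have hw1 := winding_spec (f := fun t => Ψ (γ t)) (by fun_prop) (fun t => hΨ0 _)
    (by rw [γ.target, γ.source] : Ψ (γ 1) = Ψ (γ 0)) hL
  have hw2 := winding_spec (f := fun t => Ψ (γ' t)) (by fun_prop) (fun t => hΨ0 _)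
    (by rw [γ'.target, γ'.source] : Ψ (γ' 1) = Ψ (γ' 0)) hL'
  refine winding_eq (f := fun t => Ψ ((γ.trans γ') t)) (by fun_prop) (fun t => hΨ0 _)
    (by rw [(γ.trans γ').target, (γ.trans γ').source] :
      Ψ ((γ.trans γ') 1) = Ψ ((γ.trans γ') 0)) hLift
    (m := winding (fun t => Ψ (γ t)) + winding (fun t => Ψ (γ' t))) ?_
  rw [hone, hw1, hw2]
  push_cast
  ring

end W4
section W5

variable {p q : ℕ} {u v : ℤ}

/-- the chart map from the Milnor fiber to ℂ* -/
def psiC (u v : ℤ) (z : ℂ × ℂ) : ℂ := z.1 ^ u * z.2 ^ v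

/-- the parametrization ℂ* → Milnor fiber -/
def sigC (p q : ℕ) (w : ℂ) : ℂ × ℂ := (w ^ q, (w ^ p)⁻¹)

lemma mem_ne (hp : 1 ≤ p) (hq : 1 ≤ q) {z : ℂ × ℂ} (hz : z.1 ^ p * z.2 ^ q = 1) :
    z.1 ≠ 0 ∧ z.2 ≠ 0 := by
  constructor
  · intro h
    rw [h, zero_pow (by omega), zero_mul] at hz
    exact zero_ne_one hz
  · intro h
    rw [h, zero_pow (by omega), mul_zero] at hz
    exact zero_ne_one hz

lemma sig_mem {w : ℂ} (hw : w ≠ 0) : (sigC p q w).1 ^ p * (sigC p q w).2 ^ q = 1 := by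
  rw [sigC]
  simp only
  rw [← pow_mul, inv_pow, ← pow_mul, mul_comm q p]
  exact mul_inv_cancel₀ (pow_ne_zero _ hw)

lemma psi_ne {z : ℂ × ℂ} (h1 : z.1 ≠ 0) (h2 : z.2 ≠ 0) : psiC u v z ≠ 0 :=
  mul_ne_zero (zpow_ne_zero _ h1) (zpow_ne_zero _ h2)

lemma psi_sig (hb : u * q - v * p = 1) {w : ℂ} (hw : w ≠ 0) :
    psiC u v (sigC p q w) = w := by
  rw [psiC, sigC]
  simp only
  rw [← zpow_natCast w q, ← zpow_natCast w p, ← zpow_neg, ← zpow_mul, ← zpow_mul,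
    ← zpow_add₀ hw]
  rw [show (q : ℤ) * u + -(p : ℤ) * v = u * q - v * p by ring, hb, zpow_one]

lemma sig_psi (hp : 1 ≤ p) (hq : 1 ≤ q) (hb : u * q - v * p = 1) {z : ℂ × ℂ}
    (hz : z.1 ^ p * z.2 ^ q = 1) : sigC p q (psiC u v z) = z := by
  obtain ⟨h1, h2⟩ := mem_ne hp hq hz
  have hz' : (z.1 : ℂ) ^ (p : ℤ) * z.2 ^ (q : ℤ) = 1 := by
    rw [zpow_natCast, zpow_natCast]; exact hz
  have hy : (z.2 : ℂ) ^ (q : ℤ) = (z.1 ^ (p : ℤ))⁻¹ := by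
    field_simp
    rw [mul_comm]; exact hz'
  have hx : (z.1 : ℂ) ^ (p : ℤ) = (z.2 ^ (q : ℤ))⁻¹ := by
    rw [hy, inv_inv]
  rw [sigC, psiC]
  have c1 : ((z.1 ^ u * z.2 ^ v) ^ q : ℂ) = z.1 := by
    rw [← zpow_natCast (z.1 ^ u * z.2 ^ v) q, mul_zpow, ← zpow_mul, ← zpow_mul,
      mul_comm v (q:ℤ), zpow_mul z.2, hy, ← zpow_neg, ← zpow_mul, ← zpow_add₀ h1,
      show u * (q:ℤ) + -(p:ℤ) * v = u * q - v * p by ring, hb, zpow_one]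
  have c2 : ((z.1 ^ u * z.2 ^ v) ^ p : ℂ) = z.2⁻¹ := by
    rw [← zpow_natCast (z.1 ^ u * z.2 ^ v) p, mul_zpow, ← zpow_mul, ← zpow_mul,
      mul_comm u (p:ℤ), zpow_mul z.1, hx, ← zpow_neg, ← zpow_mul, ← zpow_add₀ h2,
      show -(q:ℤ) * u + v * (p:ℤ) = -(u * q - v * p) by ring, hb]
    simp
  rw [c1, c2]
  simp

lemma sig_cont {Z : Type*} [TopologicalSpace Z] {g : Z → ℂ} (hg : Continuous g)
    (h0 : ∀ z, g z ≠ 0) : Continuous fun z => sigC p q (g z) := by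
  apply Continuous.prodMk
  · exact hg.pow q
  · exact (hg.pow p).inv₀ fun z => pow_ne_zero _ (h0 z)

lemma psi_cont {Z : Type*} [TopologicalSpace Z] {g : Z → ℂ × ℂ} (hg : Continuous g)
    (h1 : ∀ z, (g z).1 ≠ 0) (h2 : ∀ z, (g z).2 ≠ 0) :
    Continuous fun z => psiC u v (g z) := by
  apply Continuous.mul
  · exact ((continuous_fst.comp hg).zpow₀ u) fun z => Or.inl (h1 z)
  · exact ((continuous_snd.comp hg).zpow₀ v) fun z => Or.inl (h2 z)

end W5
attribute [local instance] Path.Homotopic.setoid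

end MilnorAux

open CategoryTheory

/-- For coprime `p, q ≥ 1`, the Milnor fiber
`F = {(x,y) ∈ ℂ² : x^p y^q = 1}` of `f = x^p y^q` is path-connected and has infinite
cyclic fundamental group `π₁(F) ≅ ℤ`. -/
theorem statement14 (p q : ℕ) (hp : 1 ≤ p) (hq : 1 ≤ q) (hpq : Nat.Coprime p q) :
    PathConnectedSpace {z : ℂ × ℂ // z.1 ^ p * z.2 ^ q = 1} ∧
      ∀ x : {z : ℂ × ℂ // z.1 ^ p * z.2 ^ q = 1},
        Nonempty (FundamentalGroup {z : ℂ × ℂ // z.1 ^ p * z.2 ^ q = 1} x ≃*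
          Multiplicative ℤ) := by
  classical
  obtain ⟨u, v, hb⟩ : ∃ u v : ℤ, u * q - v * p = 1 := by
    refine ⟨Nat.gcdB p q, -Nat.gcdA p q, ?_⟩
    have h := Nat.gcd_eq_gcd_ab p q
    rw [Nat.Coprime.gcd_eq_one hpq] at h
    push_cast at h ⊢
    linarith
  set F' := {z : ℂ × ℂ // z.1 ^ p * z.2 ^ q = 1} with hF'
  let Ψ : F' → ℂ := fun z => psiC u v z.val
  have hΨc : Continuous Ψ := psi_cont continuous_subtype_val
    (fun z => (mem_ne hp hq z.2).1) (fun z => (mem_ne hp hq z.2).2)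
  have hΨ0 : ∀ z : F', Ψ z ≠ 0 := fun z =>
    psi_ne (mem_ne hp hq z.2).1 (mem_ne hp hq z.2).2
  have hsig_psi : ∀ z : F', sigC p q (Ψ z) = z.val := fun z => sig_psi hp hq hb z.2
  -- joining paths
  have hjoin : ∀ a b : F', Joined a b := by
    intro a b
    have hg : Continuous fun t : unitInterval =>
        Complex.exp (((1 - (t:ℝ) : ℝ) : ℂ) * Complex.log (Ψ a) +
          (((t:ℝ) : ℝ) : ℂ) * Complex.log (Ψ b)) := by fun_prop
    refine ⟨⟨⟨fun t => ⟨sigC p q (Complex.exp (((1 - (t:ℝ) : ℝ) : ℂ) * Complex.log (Ψ a) +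
      (((t:ℝ) : ℝ) : ℂ) * Complex.log (Ψ b))), sig_mem (Complex.exp_ne_zero _)⟩, ?_⟩, ?_, ?_⟩⟩
    · exact Continuous.subtype_mk (sig_cont hg fun t => Complex.exp_ne_zero _) _
    · apply Subtype.ext
      show sigC p q (Complex.exp (((1 - ((0:unitInterval):ℝ) : ℝ) : ℂ) * Complex.log (Ψ a) +
        ((((0:unitInterval):ℝ) : ℝ) : ℂ) * Complex.log (Ψ b))) = a.val
      have h7 : (((1 - ((0:unitInterval):ℝ) : ℝ) : ℂ) * Complex.log (Ψ a) +
          ((((0:unitInterval):ℝ) : ℝ) : ℂ) * Complex.log (Ψ b)) = Complex.log (Ψ a) := by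
        norm_num
      rw [h7, Complex.exp_log (hΨ0 a), hsig_psi a]
    · apply Subtype.ext
      show sigC p q (Complex.exp (((1 - ((1:unitInterval):ℝ) : ℝ) : ℂ) * Complex.log (Ψ a) +
        ((((1:unitInterval):ℝ) : ℝ) : ℂ) * Complex.log (Ψ b))) = b.val
      have h7 : (((1 - ((1:unitInterval):ℝ) : ℝ) : ℂ) * Complex.log (Ψ a) +
          ((((1:unitInterval):ℝ) : ℝ) : ℂ) * Complex.log (Ψ b)) = Complex.log (Ψ b) := by
        norm_num
      rw [h7, Complex.exp_log (hΨ0 b), hsig_psi b]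
  have hpc : PathConnectedSpace F' :=
    ⟨⟨⟨(1, 1), by simp⟩⟩, hjoin⟩
  refine ⟨hpc, fun x => ⟨?_⟩⟩
  -- the winding number homomorphism
  let W : Path x x → ℤ := fun pa => winding (fun t => Ψ (pa t))
  let Wq : Path.Homotopic.Quotient x x → ℤ :=
    Quotient.lift W (fun a b h => winding_homotopic hΨc hΨ0 h)
  let f : FundamentalGroup F' x → Multiplicative ℤ :=
    fun a => Multiplicative.ofAdd (Wq a)
  have hmul : ∀ a b, f (a * b) = f a * f b := by
    intro a b
    obtain ⟨pa, hpa⟩ := Quotient.exists_rep a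
    obtain ⟨pb, hpb⟩ := Quotient.exists_rep b
    have h1 : (a * b) = b ≫ a := rfl
    show Multiplicative.ofAdd (Wq (a * b)) =
      Multiplicative.ofAdd (Wq a) * Multiplicative.ofAdd (Wq b)
    rw [h1, ← hpa, ← hpb]
    change Multiplicative.ofAdd (Wq ⟦pb.trans pa⟧) = _
    have h3 : Wq ⟦pb.trans pa⟧ = W (pb.trans pa) := rfl
    have h4 : W (pb.trans pa) = W pb + W pa := winding_trans hΨc hΨ0 pb pa
    have h5 : Wq (⟦pa⟧ : Path.Homotopic.Quotient x x) = W pa := rfl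
    have h6 : Wq (⟦pb⟧ : Path.Homotopic.Quotient x x) = W pb := rfl
    rw [h3, h4, h5, h6, ← ofAdd_add, add_comm]
  let Φ : FundamentalGroup F' x →* Multiplicative ℤ := MonoidHom.mk' f hmul
  have hinj : Function.Injective Φ := by
    rw [injective_iff_map_eq_one]
    intro a ha
    obtain ⟨pa, hpa⟩ := Quotient.exists_rep a
    have hW : W pa = 0 := by
      have h8 : Multiplicative.ofAdd (Wq a) = 1 := ha
      rw [← hpa] at h8
      exact h8
    obtain ⟨L, hL⟩ := exists_lift (f := fun t => Ψ (pa t)) (by fun_prop) (fun t => hΨ0 _)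
    have hLe : ∀ z, Ψ (pa 0) * Complex.exp (L z) = Ψ (pa z) := hL.2.2
    have hL1 : L 1 = 0 := by
      have h9 := winding_spec (f := fun t => Ψ (pa t)) (by fun_prop) (fun t => hΨ0 _)
        (show Ψ (pa 1) = Ψ (pa 0) by rw [pa.target, pa.source]) hL
      have h10 : winding (fun t => Ψ (pa t)) = 0 := hW
      rw [h9, h10]
      simp
    have hne : ∀ st : unitInterval × unitInterval,
        Ψ (pa 0) * Complex.exp ((((1 - (st.1:ℝ) : ℝ)) : ℂ) * L st.2) ≠ 0 :=
      fun st => mul_ne_zero (hΨ0 _) (Complex.exp_ne_zero _)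
    have hcontK : Continuous fun st : unitInterval × unitInterval =>
        (⟨sigC p q (Ψ (pa 0) * Complex.exp ((((1 - (st.1:ℝ) : ℝ)) : ℂ) * L st.2)),
          sig_mem (hne st)⟩ : F') := by
      apply Continuous.subtype_mk
      apply sig_cont _ hne
      apply continuous_const.mul
      apply Complex.continuous_exp.comp
      exact (Complex.continuous_ofReal.comp
        ((continuous_const.sub (continuous_induced_dom.comp continuous_fst)))).mul
        (hL.1.comp continuous_snd)
    have hK0 : ∀ s : unitInterval,
        (⟨sigC p q (Ψ (pa 0) * Complex.exp ((((1 - (s:ℝ) : ℝ)) : ℂ) * L 0)),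
          sig_mem (hne (s, 0))⟩ : F') = pa 0 := by
      intro s
      apply Subtype.ext
      show sigC p q (Ψ (pa 0) * Complex.exp ((((1 - (s:ℝ) : ℝ)) : ℂ) * L 0)) = (pa 0).val
      rw [hL.2.1, mul_zero, Complex.exp_zero, mul_one, hsig_psi (pa 0)]
    have hhom : Path.Homotopic pa (Path.refl x) := by
      refine ⟨⟨⟨⟨fun st => ⟨sigC p q (Ψ (pa 0) *
        Complex.exp ((((1 - (st.1:ℝ) : ℝ)) : ℂ) * L st.2)), sig_mem (hne st)⟩, hcontK⟩,
        ?_, ?_⟩, ?_⟩⟩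
      · intro t
        apply Subtype.ext
        show sigC p q (Ψ (pa 0) * Complex.exp ((((1 - ((0:unitInterval):ℝ) : ℝ)) : ℂ) * L t)) =
          (pa t).val
        have h7 : ((((1 - ((0:unitInterval):ℝ) : ℝ)) : ℂ)) = 1 := by norm_num
        rw [h7, one_mul, hLe t, hsig_psi (pa t)]
      · intro t
        apply Subtype.ext
        show sigC p q (Ψ (pa 0) * Complex.exp ((((1 - ((1:unitInterval):ℝ) : ℝ)) : ℂ) * L t)) =
          ((Path.refl x) t).val
        have h7 : ((((1 - ((1:unitInterval):ℝ) : ℝ)) : ℂ)) = 0 := by norm_num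
        rw [h7, zero_mul, Complex.exp_zero, mul_one, hsig_psi (pa 0), Path.refl_apply]
        exact congrArg Subtype.val pa.source
      · intro s t' ht'
        have hcases : t' = 0 ∨ t' = 1 := by
          rcases ht' with h | h
          · exact Or.inl h
          · exact Or.inr (Set.eq_of_mem_singleton h)
        rcases hcases with rfl | rfl
        · show (⟨sigC p q _, _⟩ : F') = pa 0
          exact hK0 s
        · show (⟨sigC p q _, _⟩ : F') = pa 1
          apply Subtype.ext
          show sigC p q (Ψ (pa 0) * Complex.exp ((((1 - ((s:unitInterval):ℝ) : ℝ)) : ℂ) * L 1)) =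
            (pa 1).val
          rw [hL1, mul_zero, Complex.exp_zero, mul_one, hsig_psi (pa 0)]
          rw [pa.target]
          exact congrArg Subtype.val pa.source
    show a = 𝟙 _
    rw [← hpa]
    have h11 : (⟦pa⟧ : Path.Homotopic.Quotient x x) = ⟦Path.refl x⟧ := Quotient.sound hhom
    rw [h11]
    rfl
  have hsurj : Function.Surjective Φ := by
    intro m
    set n : ℤ := Multiplicative.toAdd m with hn
    have hne : ∀ t : unitInterval,
        Ψ x * Complex.exp ((n : ℂ) * (2 * (Real.pi : ℂ) * Complex.I) * ((t:ℝ) : ℂ)) ≠ 0 :=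
      fun t => mul_ne_zero (hΨ0 _) (Complex.exp_ne_zero _)
    have hcont : Continuous fun t : unitInterval =>
        (⟨sigC p q (Ψ x * Complex.exp ((n : ℂ) * (2 * (Real.pi : ℂ) * Complex.I) * ((t:ℝ) : ℂ))),
          sig_mem (hne t)⟩ : F') := by
      apply Continuous.subtype_mk
      apply sig_cont _ hne
      fun_prop
    set γn : Path x x := ⟨⟨fun t =>
      ⟨sigC p q (Ψ x * Complex.exp ((n : ℂ) * (2 * (Real.pi : ℂ) * Complex.I) * ((t:ℝ) : ℂ))),
        sig_mem (hne t)⟩, hcont⟩, by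
        apply Subtype.ext
        show sigC p q (Ψ x * Complex.exp ((n : ℂ) * (2 * (Real.pi : ℂ) * Complex.I) *
          (((0:unitInterval):ℝ) : ℂ))) = x.val
        have h7 : ((n : ℂ) * (2 * (Real.pi : ℂ) * Complex.I) * (((0:unitInterval):ℝ) : ℂ)) = 0 := by
          norm_num
        rw [h7, Complex.exp_zero, mul_one, hsig_psi x], by
        apply Subtype.ext
        show sigC p q (Ψ x * Complex.exp ((n : ℂ) * (2 * (Real.pi : ℂ) * Complex.I) *
          (((1:unitInterval):ℝ) : ℂ))) = x.val
        have h7 : Complex.exp ((n : ℂ) * (2 * (Real.pi : ℂ) * Complex.I) *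
            (((1:unitInterval):ℝ) : ℂ)) = 1 := by
          rw [Set.Icc.coe_one, Complex.ofReal_one, mul_one]
          exact Complex.exp_int_mul_two_pi_mul_I n
        rw [h7, mul_one, hsig_psi x]⟩ with hγn
    have hval : ∀ t : unitInterval, Ψ (γn t) =
        Ψ x * Complex.exp ((n : ℂ) * (2 * (Real.pi : ℂ) * Complex.I) * ((t:ℝ) : ℂ)) := by
      intro t
      show psiC u v (sigC p q (Ψ x * Complex.exp ((n : ℂ) * (2 * (Real.pi : ℂ) * Complex.I) *
        ((t:ℝ) : ℂ)))) = _
      exact psi_sig hb (hne t)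
    have hWγ : W γn = n := by
      refine winding_eq (f := fun t => Ψ (γn t)) (by fun_prop) (fun t => hΨ0 _)
        (show Ψ (γn 1) = Ψ (γn 0) by rw [γn.target, γn.source]) (L := fun t =>
          (n : ℂ) * (2 * (Real.pi : ℂ) * Complex.I) * ((t:ℝ) : ℂ)) ⟨?_, ?_, ?_⟩ (m := n) ?_
      · fun_prop
      · norm_num
      · intro t
        show Ψ (γn 0) * _ = Ψ (γn t)
        rw [hval 0, hval t]
        norm_num
      · show (n : ℂ) * (2 * (Real.pi : ℂ) * Complex.I) * (((1:unitInterval):ℝ) : ℂ) =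
          (n : ℂ) * (2 * (Real.pi : ℂ) * Complex.I)
        rw [Set.Icc.coe_one, Complex.ofReal_one, mul_one]
    refine ⟨⟦γn⟧, ?_⟩
    show Multiplicative.ofAdd (Wq ⟦γn⟧) = m
    have h12 : Wq (⟦γn⟧ : Path.Homotopic.Quotient x x) = W γn := rfl
    rw [h12, hWγ, hn]
    simp
  exact MulEquiv.ofBijective Φ ⟨hinj, hsurj⟩
end

section
/- Let f = x²y² + xz³ + yz³ ∈ ℂ[x,y,z]. Then neither f nor f² lies in E_f: for k = 1 and k = 2 there exist no polynomials P, Q, R ∈ ℂ[x,y,z] with f^k = (2xy² + z³)(∂R/∂y − ∂Q/∂z) + (2x²y + z³)(∂P/∂z − ∂R/∂x) + (3xz² + 3yz²)(∂Q/∂x − ∂P/∂y). Consequently, in the Brieskorn module B(f) = ℂ[x,y,z]/E_f, the class of ω = dx∧dy∧dz is either a non-torsion element or a torsion element of torsion order at least 3. -/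
open MvPolynomial Finsupp

noncomputable def M (a b c : ℕ) : Fin 3 →₀ ℕ :=
  Finsupp.single 0 a + Finsupp.single 1 b + Finsupp.single 2 c

lemma M_apply0 (a b c : ℕ) : M a b c 0 = a := by simp [M]
lemma M_apply1 (a b c : ℕ) : M a b c 1 = b := by simp [M]
lemma M_apply2 (a b c : ℕ) : M a b c 2 = c := by simp [M]

lemma M_apply (a b c : ℕ) (i : Fin 3) : M a b c i = ![a,b,c] i := by
  fin_cases i <;> simp [M]

lemma M_eq {a b c d e f : ℕ} : M a b c = M d e f ↔ a = d ∧ b = e ∧ c = f := by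
  constructor
  · intro h
    refine ⟨?_, ?_, ?_⟩
    · simpa [M_apply0] using DFunLike.congr_fun h 0
    · simpa [M_apply1] using DFunLike.congr_fun h 1
    · simpa [M_apply2] using DFunLike.congr_fun h 2
  · rintro ⟨rfl, rfl, rfl⟩; rfl

lemma M_le {a b c d e f : ℕ} : M a b c ≤ M d e f ↔ a ≤ d ∧ b ≤ e ∧ c ≤ f := by
  rw [Finsupp.le_def]
  constructor
  · intro h
    exact ⟨by simpa [M_apply0] using h 0, by simpa [M_apply1] using h 1,
      by simpa [M_apply2] using h 2⟩
  · rintro ⟨h1, h2, h3⟩ i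
    fin_cases i <;> simpa [M_apply] using ‹_›

lemma M_add (a b c d e f : ℕ) : M a b c + M d e f = M (a+d) (b+e) (c+f) := by
  ext i; fin_cases i <;> simp [M_apply, Finsupp.add_apply]

lemma M_sub (a b c d e f : ℕ) : M a b c - M d e f = M (a-d) (b-e) (c-f) := by
  ext i; fin_cases i <;> simp [M_apply, Finsupp.tsub_apply]

lemma single0_eq_M : Finsupp.single (0 : Fin 3) 1 = M 1 0 0 := by simp [M]
lemma single1_eq_M : Finsupp.single (1 : Fin 3) 1 = M 0 1 0 := by simp [M]
lemma single2_eq_M : Finsupp.single (2 : Fin 3) 1 = M 0 0 1 := by simp [M]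

lemma coeff_pderiv {σ : Type*} [DecidableEq σ] (i : σ) (m : σ →₀ ℕ)
    (p : MvPolynomial σ ℂ) :
    coeff m (pderiv i p) = (m i + 1) * coeff (m + Finsupp.single i 1) p := by
  induction p using MvPolynomial.induction_on' with
  | monomial s a =>
    rw [pderiv_monomial, coeff_monomial, coeff_monomial]
    by_cases hs : s = m + Finsupp.single i 1
    · subst hs
      rw [if_pos (by rw [add_tsub_cancel_right]), Finsupp.add_apply,
        Finsupp.single_eq_same, if_pos rfl]
      push_cast; ring
    · rw [if_neg hs, mul_zero]
      by_cases h2 : s - Finsupp.single i 1 = m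
      · rw [if_pos h2]
        have hsi : s i = 0 := by
          by_contra hne
          apply hs
          rw [← h2, tsub_add_cancel_of_le]
          rwa [Finsupp.single_le_iff, Nat.one_le_iff_ne_zero]
        rw [hsi]; simp
      · rw [if_neg h2]
  | add p q hp hq => simp [hp, hq, mul_add]

lemma cpd0 (a b c : ℕ) (p : MvPolynomial (Fin 3) ℂ) :
    coeff (M a b c) (pderiv 0 p) = (a + 1 : ℂ) * coeff (M (a+1) b c) p := by
  rw [_root_.coeff_pderiv, single0_eq_M, M_add, M_apply0]
  norm_num

lemma cpd1 (a b c : ℕ) (p : MvPolynomial (Fin 3) ℂ) :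
    coeff (M a b c) (pderiv 1 p) = (b + 1 : ℂ) * coeff (M a (b+1) c) p := by
  rw [_root_.coeff_pderiv, single1_eq_M, M_add, M_apply1]
  norm_num

lemma cpd2 (a b c : ℕ) (p : MvPolynomial (Fin 3) ℂ) :
    coeff (M a b c) (pderiv 2 p) = (c + 1 : ℂ) * coeff (M a b (c+1)) p := by
  rw [_root_.coeff_pderiv, single2_eq_M, M_add, M_apply2]
  norm_num

lemma mono_M (a b c : ℕ) (r : ℂ) :
    (monomial (M a b c) r : MvPolynomial (Fin 3) ℂ) = C r * X 0 ^ a * X 1 ^ b * X 2 ^ c := by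
  have h : (C r * X 0 ^ a * X 1 ^ b * X 2 ^ c : MvPolynomial (Fin 3) ℂ)
      = monomial (0 + Finsupp.single 0 a + Finsupp.single 1 b + Finsupp.single 2 c)
        (((r * 1) * 1) * 1) := by
    rw [C_apply, X_pow_eq_monomial, X_pow_eq_monomial, X_pow_eq_monomial,
      monomial_mul, monomial_mul, monomial_mul]
  rw [h, zero_add, mul_one, mul_one, mul_one, M]


lemma cmmM (a b c d e f : ℕ) (r : ℂ) (p : MvPolynomial (Fin 3) ℂ)
    (h : a ≤ d ∧ b ≤ e ∧ c ≤ f) :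
    coeff (M d e f) (monomial (M a b c) r * p) = r * coeff (M (d-a) (e-b) (f-c)) p := by
  rw [coeff_monomial_mul', if_pos (M_le.mpr h), M_sub]

lemma cmmM0 (a b c d e f : ℕ) (r : ℂ) (p : MvPolynomial (Fin 3) ℂ)
    (h : ¬ (a ≤ d ∧ b ≤ e ∧ c ≤ f)) :
    coeff (M d e f) (monomial (M a b c) r * p) = 0 := by
  rw [coeff_monomial_mul', if_neg (fun hc => h (M_le.mp hc))]

lemma cM_eq (a b c d e f : ℕ) (r : ℂ) (h : a = d ∧ b = e ∧ c = f) :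
    coeff (M d e f) (monomial (M a b c) r : MvPolynomial (Fin 3) ℂ) = r := by
  rw [coeff_monomial, if_pos (M_eq.mpr h)]

lemma cM_ne (a b c d e f : ℕ) (r : ℂ) (h : ¬ (a = d ∧ b = e ∧ c = f)) :
    coeff (M d e f) (monomial (M a b c) r : MvPolynomial (Fin 3) ℂ) = 0 := by
  rw [coeff_monomial, if_neg (fun hc => h (M_eq.mp hc))]

set_option maxHeartbeats 4000000 in
/-- For `f = x²y² + xz³ + yz³`, neither `f` nor `f²` lies in
`E_f = {f_x(R_y − Q_z) + f_y(P_z − R_x) + f_z(Q_x − P_y)}`, where `f_x = 2xy² + z³`,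
`f_y = 2x²y + z³`, `f_z = 3xz² + 3yz²`; hence the class of `ω = dx∧dy∧dz` in
`B(f) = ℂ[x,y,z]/E_f` is either non-torsion or of torsion order at least 3. -/
theorem statement16 :
    (¬ ∃ P Q R : MvPolynomial (Fin 3) ℂ,
        (X 0 ^ 2 * X 1 ^ 2 + X 0 * X 2 ^ 3 + X 1 * X 2 ^ 3 : MvPolynomial (Fin 3) ℂ) =
          (2 * (X 0 * X 1 ^ 2) + X 2 ^ 3) * (pderiv 1 R - pderiv 2 Q) +
          (2 * (X 0 ^ 2 * X 1) + X 2 ^ 3) * (pderiv 2 P - pderiv 0 R) +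
          (3 * (X 0 * X 2 ^ 2) + 3 * (X 1 * X 2 ^ 2)) * (pderiv 0 Q - pderiv 1 P)) ∧
    (¬ ∃ P Q R : MvPolynomial (Fin 3) ℂ,
        (X 0 ^ 2 * X 1 ^ 2 + X 0 * X 2 ^ 3 + X 1 * X 2 ^ 3 : MvPolynomial (Fin 3) ℂ) ^ 2 =
          (2 * (X 0 * X 1 ^ 2) + X 2 ^ 3) * (pderiv 1 R - pderiv 2 Q) +
          (2 * (X 0 ^ 2 * X 1) + X 2 ^ 3) * (pderiv 2 P - pderiv 0 R) +
          (3 * (X 0 * X 2 ^ 2) + 3 * (X 1 * X 2 ^ 2)) * (pderiv 0 Q - pderiv 1 P)) := by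
  have hT1 : (2 * (X 0 * X 1 ^ 2) + X 2 ^ 3 : MvPolynomial (Fin 3) ℂ)
      = monomial (M 1 2 0) 2 + monomial (M 0 0 3) 1 := by
    simp only [mono_M, map_ofNat, map_one]; ring
  have hT2 : (2 * (X 0 ^ 2 * X 1) + X 2 ^ 3 : MvPolynomial (Fin 3) ℂ)
      = monomial (M 2 1 0) 2 + monomial (M 0 0 3) 1 := by
    simp only [mono_M, map_ofNat, map_one]; ring
  have hT3 : (3 * (X 0 * X 2 ^ 2) + 3 * (X 1 * X 2 ^ 2) : MvPolynomial (Fin 3) ℂ)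
      = monomial (M 1 0 2) 3 + monomial (M 0 1 2) 3 := by
    simp only [mono_M, map_ofNat, map_one]; ring
  constructor
  · rintro ⟨P, Q, R, h⟩
    have hf : (X 0 ^ 2 * X 1 ^ 2 + X 0 * X 2 ^ 3 + X 1 * X 2 ^ 3 : MvPolynomial (Fin 3) ℂ)
        = monomial (M 2 2 0) 1 + monomial (M 1 0 3) 1 + monomial (M 0 1 3) 1 := by
      simp only [mono_M, map_ofNat, map_one]; ring
    rw [hf, hT1, hT2, hT3] at h
    simp only [add_mul, mul_sub] at h
    have e1_0 := congrArg (coeff (M 0 1 3)) h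
    simp [coeff_add, coeff_sub, cmmM, cmmM0, cM_eq, cM_ne,
      cpd0, cpd1, cpd2, -MvPolynomial.coeff_monomial] at e1_0
    have e1_1 := congrArg (coeff (M 1 0 3)) h
    simp [coeff_add, coeff_sub, cmmM, cmmM0, cM_eq, cM_ne,
      cpd0, cpd1, cpd2, -MvPolynomial.coeff_monomial] at e1_1
    have e1_2 := congrArg (coeff (M 1 3 0)) h
    simp [coeff_add, coeff_sub, cmmM, cmmM0, cM_eq, cM_ne,
      cpd0, cpd1, cpd2, -MvPolynomial.coeff_monomial] at e1_2
    have e1_3 := congrArg (coeff (M 2 2 0)) h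
    simp [coeff_add, coeff_sub, cmmM, cmmM0, cM_eq, cM_ne,
      cpd0, cpd1, cpd2, -MvPolynomial.coeff_monomial] at e1_3
    have e1_4 := congrArg (coeff (M 3 1 0)) h
    simp [coeff_add, coeff_sub, cmmM, cmmM0, cM_eq, cM_ne,
      cpd0, cpd1, cpd2, -MvPolynomial.coeff_monomial] at e1_4
    have hcontra : (9 : ℂ) = 0 := by linear_combination (2 : ℂ) * e1_0 + (2 : ℂ) * e1_1 + (-1 : ℂ) * e1_2 + (5 : ℂ) * e1_3 + (-1 : ℂ) * e1_4
    norm_num at hcontra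
  · rintro ⟨P, Q, R, h⟩
    have hf : ((X 0 ^ 2 * X 1 ^ 2 + X 0 * X 2 ^ 3 + X 1 * X 2 ^ 3 : MvPolynomial (Fin 3) ℂ)) ^ 2
        = monomial (M 0 2 6) 1 + monomial (M 1 1 6) 2 + monomial (M 2 0 6) 1 + monomial (M 2 3 3) 2 + monomial (M 3 2 3) 2 + monomial (M 4 4 0) 1 := by
      simp only [mono_M, map_ofNat, map_one]; ring
    rw [hf, hT1, hT2, hT3] at h
    simp only [add_mul, mul_sub] at h
    have e2_0 := congrArg (coeff (M 0 2 6)) h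
    simp [coeff_add, coeff_sub, cmmM, cmmM0, cM_eq, cM_ne,
      cpd0, cpd1, cpd2, -MvPolynomial.coeff_monomial] at e2_0
    have e2_1 := congrArg (coeff (M 0 5 3)) h
    simp [coeff_add, coeff_sub, cmmM, cmmM0, cM_eq, cM_ne,
      cpd0, cpd1, cpd2, -MvPolynomial.coeff_monomial] at e2_1
    have e2_2 := congrArg (coeff (M 1 1 6)) h
    simp [coeff_add, coeff_sub, cmmM, cmmM0, cM_eq, cM_ne,
      cpd0, cpd1, cpd2, -MvPolynomial.coeff_monomial] at e2_2
    have e2_3 := congrArg (coeff (M 1 4 3)) h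
    simp [coeff_add, coeff_sub, cmmM, cmmM0, cM_eq, cM_ne,
      cpd0, cpd1, cpd2, -MvPolynomial.coeff_monomial] at e2_3
    have e2_4 := congrArg (coeff (M 1 7 0)) h
    simp [coeff_add, coeff_sub, cmmM, cmmM0, cM_eq, cM_ne,
      cpd0, cpd1, cpd2, -MvPolynomial.coeff_monomial] at e2_4
    have e2_5 := congrArg (coeff (M 2 0 6)) h
    simp [coeff_add, coeff_sub, cmmM, cmmM0, cM_eq, cM_ne,
      cpd0, cpd1, cpd2, -MvPolynomial.coeff_monomial] at e2_5
    have e2_6 := congrArg (coeff (M 2 3 3)) h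
    simp [coeff_add, coeff_sub, cmmM, cmmM0, cM_eq, cM_ne,
      cpd0, cpd1, cpd2, -MvPolynomial.coeff_monomial] at e2_6
    have e2_7 := congrArg (coeff (M 2 6 0)) h
    simp [coeff_add, coeff_sub, cmmM, cmmM0, cM_eq, cM_ne,
      cpd0, cpd1, cpd2, -MvPolynomial.coeff_monomial] at e2_7
    have e2_8 := congrArg (coeff (M 3 2 3)) h
    simp [coeff_add, coeff_sub, cmmM, cmmM0, cM_eq, cM_ne,
      cpd0, cpd1, cpd2, -MvPolynomial.coeff_monomial] at e2_8
    have e2_9 := congrArg (coeff (M 3 5 0)) h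
    simp [coeff_add, coeff_sub, cmmM, cmmM0, cM_eq, cM_ne,
      cpd0, cpd1, cpd2, -MvPolynomial.coeff_monomial] at e2_9
    have e2_10 := congrArg (coeff (M 4 1 3)) h
    simp [coeff_add, coeff_sub, cmmM, cmmM0, cM_eq, cM_ne,
      cpd0, cpd1, cpd2, -MvPolynomial.coeff_monomial] at e2_10
    have e2_11 := congrArg (coeff (M 4 4 0)) h
    simp [coeff_add, coeff_sub, cmmM, cmmM0, cM_eq, cM_ne,
      cpd0, cpd1, cpd2, -MvPolynomial.coeff_monomial] at e2_11
    have e2_12 := congrArg (coeff (M 5 0 3)) h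
    simp [coeff_add, coeff_sub, cmmM, cmmM0, cM_eq, cM_ne,
      cpd0, cpd1, cpd2, -MvPolynomial.coeff_monomial] at e2_12
    have e2_13 := congrArg (coeff (M 5 3 0)) h
    simp [coeff_add, coeff_sub, cmmM, cmmM0, cM_eq, cM_ne,
      cpd0, cpd1, cpd2, -MvPolynomial.coeff_monomial] at e2_13
    have e2_14 := congrArg (coeff (M 6 2 0)) h
    simp [coeff_add, coeff_sub, cmmM, cmmM0, cM_eq, cM_ne,
      cpd0, cpd1, cpd2, -MvPolynomial.coeff_monomial] at e2_14
    have e2_15 := congrArg (coeff (M 7 1 0)) h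
    simp [coeff_add, coeff_sub, cmmM, cmmM0, cM_eq, cM_ne,
      cpd0, cpd1, cpd2, -MvPolynomial.coeff_monomial] at e2_15
    have hcontra : (2079 : ℂ) = 0 := by linear_combination (308 : ℂ) * e2_0 + (182 : ℂ) * e2_1 + (44 : ℂ) * e2_2 + (-154 : ℂ) * e2_3 + (-91 : ℂ) * e2_4 + (308 : ℂ) * e2_5 + (110 : ℂ) * e2_6 + (119 : ℂ) * e2_7 + (110 : ℂ) * e2_8 + (-187 : ℂ) * e2_9 + (-154 : ℂ) * e2_10 + (935 : ℂ) * e2_11 + (182 : ℂ) * e2_12 + (-187 : ℂ) * e2_13 + (119 : ℂ) * e2_14 + (-91 : ℂ) * e2_15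
    norm_num at hcontra
end

section
/- Let f = x²z + y³ + xyw ∈ ℂ[x,y,z,w]. Then there exist polynomials P, Q, R, S, T, U ∈ ℂ[x,y,z,w] such that f = (2xz + yw)(∂S/∂w − ∂T/∂z + ∂U/∂y) + (3y² + xw)(−∂Q/∂w + ∂R/∂z − ∂U/∂x) + x²(∂P/∂w − ∂R/∂y + ∂T/∂x) + xy(∂P/∂z − ∂Q/∂y − ∂S/∂x). In other words, the class of ω = dx∧dy∧dz∧dw in the Brieskorn module B(f) is a torsion element annihilated by t, i.e. of torsion order 1. -/
open MvPolynomial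

/-- For `f = x²z + y³ + xyw ∈ ℂ[x,y,z,w]` (a cubic surface in `ℙ³` with
non-isolated singularities), the class of `ω = dx∧dy∧dz∧dw` in the Brieskorn module
`B(f)` is a torsion element annihilated by `t`: `f` lies in the image `E_f` of
`df ∧ d(Ω²)`, i.e. `f = f_x(S_w − T_z + U_y) + f_y(−Q_w + R_z − U_x) + f_z(P_w − R_y + T_x)
+ f_w(P_z − Q_y − S_x)` for suitable `P,Q,R,S,T,U`, where `f_x = 2xz + yw`,
`f_y = 3y² + xw`, `f_z = x²`, `f_w = xy`. -/
theorem statement17 :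
    ∃ P Q R S T U : MvPolynomial (Fin 4) ℂ,
      (X 0 ^ 2 * X 2 + X 1 ^ 3 + X 0 * X 1 * X 3 : MvPolynomial (Fin 4) ℂ) =
        (2 * (X 0 * X 2) + X 1 * X 3) * (pderiv 3 S - pderiv 2 T + pderiv 1 U) +
        (3 * X 1 ^ 2 + X 0 * X 3) * (-(pderiv 3 Q) + pderiv 2 R - pderiv 0 U) +
        X 0 ^ 2 * (pderiv 3 P - pderiv 1 R + pderiv 0 T) +
        X 0 * X 1 * (pderiv 2 P - pderiv 1 Q - pderiv 0 S) := by
  refine ⟨C (3:ℂ)⁻¹ * (X 2 * X 3), -(C (3:ℂ)⁻¹ * (X 1 * X 3)), 0,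
    C (3:ℂ)⁻¹ * (X 0 * X 3), 0, 0, ?_⟩
  simp only [map_mul, map_neg, map_zero, pderiv_C, pderiv_mul, pderiv_X, zero_mul,
    mul_zero, Pi.single_apply]
  norm_num
  have h1 : (C (3:ℂ)⁻¹ : MvPolynomial (Fin 4) ℂ) * 3 = 1 := by
    rw [show (3 : MvPolynomial (Fin 4) ℂ) = C 3 from (map_ofNat C 3).symm, ← map_mul]
    norm_num
  rw [← sub_eq_zero]
  ring_nf
  simp only [show ((0:Fin 4) = 3) = False from by decide,
    show ((3:Fin 4) = 2) = False from by decide, show ((3:Fin 4) = 1) = False from by decide,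
    show ((3:Fin 4) = 0) = False from by decide, show ((1:Fin 4) = 3) = False from by decide,
    show ((2:Fin 4) = 3) = False from by decide, if_false, mul_zero, zero_mul]
  simp only [one_div, mul_assoc, h1, mul_one]
  ring
end
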